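/- Let X be a compact metric space and f : X → X continuous. If f has the mean ergodic shadowing property, then f has the weak asymptotic average shadowing property. -/
import Mathlib


open Filter Metric

open scoped Classical in
noncomputable def upperDens (A : Set ℕ) : ℝ :=
  Filter.limsup (fun n => (((Finset.range n).filter (· ∈ A)).card : ℝ) / n) Filter.atTop

open scoped Classical in
noncomputable def lowerDens (A : Set ℕ) : ℝ :=
  Filter.liminf (fun n => (((Finset.range n).filter (· ∈ A)).card : ℝ) / n) Filter.atTop

open scoped Classical in
def DensityZero (A : Set ℕ) : Prop :=
  Filter.Tendsto (fun n => (((Finset.range n).filter (· ∈ A)).card : ℝ) / n)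
    Filter.atTop (nhds 0)

noncomputable def cesaro (a : ℕ → ℝ) (n : ℕ) : ℝ := (∑ i ∈ Finset.range n, a i) / n

variable {X : Type*} [MetricSpace X]

def ErgodicPO (f : X → X) (δ : ℝ) (x : ℕ → X) : Prop :=
  DensityZero {j | δ ≤ dist (f (x j)) (x (j + 1))}

def AvgPO (f : X → X) (δ : ℝ) (x : ℕ → X) : Prop :=
  ∃ N : ℕ, 0 < N ∧ ∀ n ≥ N, ∀ k : ℕ,
    (∑ j ∈ Finset.range n, dist (f (x (j + k))) (x (j + k + 1))) / n < δ

def WeakAsympAvgPO (f : X → X) (δ : ℝ) (x : ℕ → X) : Prop :=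
  Filter.limsup (cesaro (fun j => dist (f (x j)) (x (j + 1)))) Filter.atTop < δ

def AsympAvgPO (f : X → X) (x : ℕ → X) : Prop :=
  Filter.Tendsto (cesaro (fun j => dist (f (x j)) (x (j + 1)))) Filter.atTop (nhds 0)

def ShadowAvg (f : X → X) (ε : ℝ) (z : X) (x : ℕ → X) : Prop :=
  Filter.limsup (cesaro (fun j => dist (f^[j] z) (x j))) Filter.atTop < ε

def MeanErgodicShadowing (f : X → X) : Prop :=
  ∀ ε > (0:ℝ), ∃ δ > (0:ℝ), ∀ x : ℕ → X, ErgodicPO f δ x → ∃ z, ShadowAvg f ε z x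

def AvgShadowing (f : X → X) : Prop :=
  ∀ ε > (0:ℝ), ∃ δ > (0:ℝ), ∀ x : ℕ → X, AvgPO f δ x → ∃ z, ShadowAvg f ε z x

def WeakAsympAvgShadowing (f : X → X) : Prop :=
  ∀ ε > (0:ℝ), ∀ x : ℕ → X, AsympAvgPO f x → ∃ z, ShadowAvg f ε z x

def AlmostAsympAvgShadowing (f : X → X) : Prop :=
  ∀ ε > (0:ℝ), ∃ δ > (0:ℝ), ∀ x : ℕ → X, WeakAsympAvgPO f δ x → ∃ z, ShadowAvg f ε z x

def AsympAvgShadowing (f : X → X) : Prop :=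
  ∀ x : ℕ → X, AsympAvgPO f x →
    ∃ z, Filter.Tendsto (cesaro (fun j => dist (f^[j] z) (x j))) Filter.atTop (nhds 0)

def MalphaShadowing (f : X → X) (α : ℝ) : Prop :=
  ∀ ε > (0:ℝ), ∃ δ > (0:ℝ), ∀ x : ℕ → X, ErgodicPO f δ x →
    ∃ z, α < lowerDens {j | dist (f^[j] z) (x j) < ε}

theorem stmt8 {X : Type*} [MetricSpace X] [CompactSpace X] (f : X → X)
    (hf : Continuous f) (h : MeanErgodicShadowing f) : WeakAsympAvgShadowing f := by
  intro ε hε x hx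
  obtain ⟨δ, hδ, hδ'⟩ := h ε hε
  apply hδ' x
  set a : ℕ → ℝ := fun j => dist (f (x j)) (x (j + 1)) with ha
  have hbound : ∀ n : ℕ,
      (((Finset.range n).filter (· ∈ {j | δ ≤ a j})).card : ℝ) / n ≤ cesaro a n / δ := by
    intro n
    rcases Nat.eq_zero_or_pos n with h0 | h0
    · simp [h0, cesaro]
    have h1 : δ * (((Finset.range n).filter (· ∈ {j | δ ≤ a j})).card : ℝ)
        ≤ ∑ j ∈ Finset.range n, a j := by
      calc δ * (((Finset.range n).filter (· ∈ {j | δ ≤ a j})).card : ℝ)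
          ≤ ∑ j ∈ (Finset.range n).filter (· ∈ {j | δ ≤ a j}), a j := by
            rw [mul_comm]
            have := Finset.card_nsmul_le_sum
              ((Finset.range n).filter (· ∈ {j | δ ≤ a j})) a δ
              (fun i hi => (Finset.mem_filter.mp hi).2)
            simpa [nsmul_eq_mul] using this
        _ ≤ ∑ j ∈ Finset.range n, a j :=
            Finset.sum_le_sum_of_subset_of_nonneg (Finset.filter_subset _ _)
              (fun i _ _ => dist_nonneg)
    have hn : (0:ℝ) < n := by exact_mod_cast h0
    rw [cesaro, le_div_iff₀ hδ, div_mul_eq_mul_div, div_le_div_iff₀ hn hn]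
    nlinarith
  have hzero : Filter.Tendsto (fun n => cesaro a n / δ) Filter.atTop (nhds 0) := by
    simpa using hx.div_const δ
  exact squeeze_zero (fun n => by positivity) hbound hzero
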